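/- arXiv:1806.00170 — 2 statements merged into one kernel-verified Lean document; each statement's English description precedes it below -/
import Mathlib

section
/- Positivity for vector spaces (quadruple rank inequality): Let k be a field and let F : (ℝ, ≤) → Vect be a functor into finite-dimensional k-vector spaces. Then for all real numbers a ≤ b ≤ c ≤ d, rank F(b ≤ c) + rank F(a ≤ d) ≥ rank F(a ≤ c) + rank F(b ≤ d), where rank denotes the dimension of the image of a linear map and F(x ≤ y) : F(x) → F(y) is the structure map. -/
open CategoryTheory CategoryTheory.Limits
open scoped Classical ENNReal

noncomputable section

universe v u

/-! ## The poset of intervals -/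

/-- `Rbar` is `ℝ ∪ {∞}`. -/
abbrev Rbar := WithTop ℝ

/-- An element of the poset `Dgm`: an interval `[p, q)` with `p ≤ q` in `ℝ ∪ {∞}`. -/
structure PDInterval where
  p : Rbar
  q : Rbar
  hle : p ≤ q

namespace PDInterval

/-- `I.Sub J` means `I ⊆ J` as intervals, i.e. `J.p ≤ I.p` and `I.q ≤ J.q`. -/
def Sub (I J : PDInterval) : Prop := J.p ≤ I.p ∧ I.q ≤ J.q

/-- The diagonal `Δ ⊆ Dgm` consists of the empty intervals `[p, p)`. -/
def onDiag (I : PDInterval) : Prop := I.p = I.q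

/-- The interval `[a, b)` with real endpoints. -/
def mk' (a b : ℝ) (h : a ≤ b) : PDInterval := ⟨(a : Rbar), (b : Rbar), by exact_mod_cast h⟩

/-- The interval `[a, ∞)`. -/
def mkInf (a : ℝ) : PDInterval := ⟨(a : Rbar), ⊤, le_top⟩

/-- Membership in `Dgm(S)`, where `S` is a finite set of reals together (implicitly)
with `∞`: both endpoints of `I` lie in `S ∪ {∞}`. -/
def memDgmS (S : Finset ℝ) (I : PDInterval) : Prop :=
  (I.p = ⊤ ∨ ∃ s ∈ S, I.p = (s : Rbar)) ∧ (I.q = ⊤ ∨ ∃ s ∈ S, I.q = (s : Rbar))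

/-- The `ε`-box around an interval `I = [p, q)`: all intervals `[r, s)` with
`p - ε < r ≤ p + ε` and `q - ε ≤ s < q + ε`, declared empty if `q - ε ≤ p + ε`.
For `q = ∞` it consists of the intervals `[r, ∞)` with `p - ε < r ≤ p + ε`. -/
def box (ε : ℝ) (I : PDInterval) : Set PDInterval :=
  if I.p = ⊤ then ∅
  else if I.q = ⊤ then
    { J | J.q = ⊤ ∧ ∃ r : ℝ, J.p = (r : Rbar) ∧
        WithTop.untopD 0 I.p - ε < r ∧ r ≤ WithTop.untopD 0 I.p + ε }
  else if WithTop.untopD 0 I.q - ε ≤ WithTop.untopD 0 I.p + ε then ∅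
  else
    { J | ∃ r s : ℝ, J.p = (r : Rbar) ∧ J.q = (s : Rbar) ∧
        WithTop.untopD 0 I.p - ε < r ∧ r ≤ WithTop.untopD 0 I.p + ε ∧
        WithTop.untopD 0 I.q - ε ≤ s ∧ s < WithTop.untopD 0 I.q + ε }

/-- The distance between two endpoints in `ℝ ∪ {∞}`; it is `∞` if exactly one of the two
endpoints is `∞`. -/
def edist' : Rbar → Rbar → ℝ≥0∞ := fun a b =>
  if a = ⊤ then (if b = ⊤ then 0 else ⊤)
  else if b = ⊤ then ⊤
  else ENNReal.ofReal |WithTop.untopD 0 a - WithTop.untopD 0 b|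

/-- The distance `max (|p₁ - p₂|, |q₁ - q₂|)` between two intervals. -/
def pairDist (I J : PDInterval) : ℝ≥0∞ := max (edist' I.p J.p) (edist' I.q J.q)

end PDInterval

/-! ## Matchings and the bottleneck distance -/

section Matching

variable {G : Type*} [AddCommGroup G]

/-- A matching between two finitely supported functions `Y₁ Y₂ : Dgm → G`:
a map `γ : Dgm × Dgm → G` whose row sums give `Y₁` off the diagonal and whose column
sums give `Y₂` off the diagonal. -/
def IsMatching (Y₁ Y₂ : PDInterval → G) (γ : PDInterval → PDInterval → G) : Prop :=
  (∀ I : PDInterval, ¬ I.onDiag →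
    (Function.support (γ I)).Finite ∧ Y₁ I = ∑ᶠ J, γ I J) ∧
  (∀ J : PDInterval, ¬ J.onDiag →
    (Function.support (fun I => γ I J)).Finite ∧ Y₂ J = ∑ᶠ I, γ I J)

/-- The norm of a matching: the supremum of `max (|p₁ - p₂|, |q₁ - q₂|)` over all pairs
`I = [p₁, q₁)`, `J = [p₂, q₂)` with `γ I J ≠ 0`. -/
def matchingNorm (γ : PDInterval → PDInterval → G) : ℝ≥0∞ :=
  ⨆ (I : PDInterval) (J : PDInterval) (_ : γ I J ≠ 0), PDInterval.pairDist I J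

/-- The bottleneck distance between two persistence diagrams: the infimum of the norms
of all matchings between them. -/
def bottleneckDist (Y₁ Y₂ : PDInterval → G) : ℝ≥0∞ :=
  ⨅ (γ : PDInterval → PDInterval → G) (_ : IsMatching Y₁ Y₂ γ), matchingNorm γ

end Matching

/-! ## Persistence modules, constructibility, interleavings -/

section PersMod

variable (C : Type u) [Category.{v} C]

/-- A persistence module `F : (ℝ, ≤) → C` is `S`-constructible (for a finite set
`S = {s₁ < ⋯ < s_k} ⊆ ℝ`, to which `∞` is implicitly adjoined) if `F p` is a zero object
for `p < s₁` and `F (p ≤ q)` is an isomorphism whenever no element of `S` lies in `(p, q]`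
and some element of `S` is `≤ p`. -/
def IsConstructibleOn (F : ℝ ⥤ C) (S : Finset ℝ) : Prop :=
  (∀ p : ℝ, (∀ s ∈ S, p < s) → IsZero (F.obj p)) ∧
  (∀ (p q : ℝ) (h : p ≤ q), (∃ s ∈ S, s ≤ p) → (∀ s ∈ S, s ≤ p ∨ q < s) →
    IsIso (F.map (homOfLE h)))

/-- A persistence module is constructible if it is `S`-constructible for some finite `S`. -/
def IsConstructible (F : ℝ ⥤ C) : Prop := ∃ S : Finset ℝ, IsConstructibleOn C F S

/-- The underlying type of the poset `ℝ ×_ε {0, 1}`. -/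
def InterPoset (_ : ℝ) : Type := ℝ × Bool

namespace InterPoset

variable (ε : ℝ)

/-- The partial order on `ℝ ×_ε {0, 1}`: `(p, t) ≤ (q, s)` iff `t = s` and `p ≤ q`, or
`t ≠ s` and `p + ε ≤ q`.  (For `ε < 0` we use `max ε 0` in place of `ε` so that the
order is well defined; all statements only use `ε ≥ 0`, where this agrees with the paper.) -/
instance : Preorder (InterPoset ε) where
  le x y := x.1 + (if x.2 = y.2 then 0 else max ε 0) ≤ y.1
  le_refl x := by simp
  le_trans x y z h₁ h₂ := by
    have hm : (0 : ℝ) ≤ max ε 0 := le_max_right _ _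
    by_cases h12 : x.2 = y.2 <;> by_cases h23 : y.2 = z.2 <;>
      [skip; skip; skip; have hxz : x.2 = z.2 := by
        revert h12 h23; cases x.2 <;> cases y.2 <;> cases z.2 <;> simp] <;>
      simp_all <;> linarith [le_max_right ε (0:ℝ)]

/-- The embedding `ι₀ : ℝ → ℝ ×_ε {0, 1}`, `p ↦ (p, 0)`. -/
def iota0 : ℝ ⥤ InterPoset ε :=
  Monotone.functor (f := fun p => ((p, false) : InterPoset ε))
    (fun _ _ h => by simpa [(· ≤ ·)] using h)

/-- The embedding `ι₁ : ℝ → ℝ ×_ε {0, 1}`, `p ↦ (p, 1)`. -/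
def iota1 : ℝ ⥤ InterPoset ε :=
  Monotone.functor (f := fun p => ((p, true) : InterPoset ε))
    (fun _ _ h => by simpa [(· ≤ ·)] using h)

end InterPoset

/-- Two persistence modules `F` and `G` are `ε`-interleaved if there is a functor
`Φ : ℝ ×_ε {0, 1} → C` whose restrictions along `ι₀` and `ι₁` are naturally isomorphic
to `F` and `G` respectively. -/
def Interleaved (F G : ℝ ⥤ C) (ε : ℝ) : Prop :=
  ∃ Φ : InterPoset ε ⥤ C,
    Nonempty (InterPoset.iota0 ε ⋙ Φ ≅ F) ∧ Nonempty (InterPoset.iota1 ε ⋙ Φ ≅ G)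

/-- The interleaving distance: the infimum of all `ε ≥ 0` such that `F` and `G` are
`ε`-interleaved (`∞` if there is no interleaving). -/
def interleavingDist (F G : ℝ ⥤ C) : ℝ≥0∞ :=
  sInf { x : ℝ≥0∞ | ∃ ε : ℝ, 0 ≤ ε ∧ Interleaved C F G ε ∧ x = ENNReal.ofReal ε }

end PersMod

/-! ## The Grothendieck group -/

section K0

variable (C : Type u) [Category.{v} C] [Limits.HasZeroMorphisms C]

/-- The subgroup of relations coming from short exact sequences `0 → a → b → c → 0`:
it is generated by the elements `[b] - ([a] + [c])`. -/
def sesRelations : AddSubgroup (FreeAbelianGroup C) :=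
  AddSubgroup.closure { x | ∃ S : ShortComplex C, S.ShortExact ∧
    x = FreeAbelianGroup.of S.X₂ - (FreeAbelianGroup.of S.X₁ + FreeAbelianGroup.of S.X₃) }

/-- The Grothendieck group of `C`: the free abelian group on the objects of `C` modulo one
relation `[b] = [a] + [c]` for each short exact sequence `0 → a → b → c → 0`.  (Isomorphic
objects automatically get identified, via the short exact sequences `0 → a → b → 0 → 0`.) -/
def K0 : Type u := FreeAbelianGroup C ⧸ sesRelations C

instance : AddCommGroup (K0 C) := by unfold K0; infer_instance

/-- The class `[a] ∈ K0 C` of an object `a` of `C`. -/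
def K0.mk (a : C) : K0 C := QuotientAddGroup.mk (FreeAbelianGroup.of a)

/-- The translation-invariant partial order on the Grothendieck group:
`x ⪯ y` iff `y - x = [c]` for some object `c` of `C`. -/
def K0.le (x y : K0 C) : Prop := ∃ c : C, y - x = K0.mk C c

end K0

/-! ## The rank function and the persistence diagram -/

section Rank

variable (C : Type u) [Category.{v} C] [Abelian C]

/-- The class in `K0 C` of the image of the structure map `F (a ≤ b)`. -/
def K0.imageClass (F : ℝ ⥤ C) {a b : ℝ} (h : a ≤ b) : K0 C :=
  K0.mk C (Limits.image (F.map (homOfLE h)))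

/-- The hypothesis on the auxiliary constant `δ > 0` used to define the rank function of an
`S`-constructible module: `s_{i-1} < s_i - δ` for consecutive elements of `S`. -/
def GoodDelta (S : Finset ℝ) (δ : ℝ) : Prop :=
  0 < δ ∧ ∀ s ∈ S, ∀ s' ∈ S, s < s' → s < s' - δ

/-- The rank function `dF : Dgm → K0 C` of an `S`-constructible persistence module `F`
(relative to the auxiliary constant `δ`): for `I = [p, s)` with `s ∈ S` it is the class of
the image of `F (p ≤ s - δ)`; for `I = [p, ∞)` it is the class of the image of `F (p ≤ z)`
for `z ≥ max p (max S)`; and for all other `I = [p, q)` it is the class of the image of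
`F (p ≤ q)`.  (Endpoints are adjusted, using constructibility, so that the formula makes
sense for every interval of `Dgm`.) -/
def rankFn (F : ℝ ⥤ C) (S : Finset ℝ) (δ : ℝ) (I : PDInterval) : K0 C :=
  let M : ℝ := (if h : S.Nonempty then S.max' h else 0) + 1
  let lp : ℝ := WithTop.untopD M I.p
  let q' : ℝ :=
    if I.q = ⊤ then max lp M
    else if WithTop.untopD 0 I.q ∈ S then WithTop.untopD 0 I.q - δ else WithTop.untopD 0 I.q
  K0.imageClass C F (min_le_right lp q')

/-- `Ft` is the persistence diagram of the `S`-constructible module `F` (with rank function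
taken relative to `δ`): it is finitely supported and satisfies the Möbius inversion formula
`dF I = ∑_{J ⊇ I} Ft J` for every interval `I ∈ Dgm`. -/
def IsPersDiagramOf (F : ℝ ⥤ C) (S : Finset ℝ) (δ : ℝ) (Ft : PDInterval → K0 C) : Prop :=
  (Function.support Ft).Finite ∧
  ∀ I : PDInterval, rankFn C F S δ I = ∑ᶠ (J : PDInterval) (_ : I.Sub J), Ft J

end Rank

end

/-! ## Persistence modules of finite-dimensional vector spaces: `ℤ`-valued diagrams -/

section VectRank

variable {k : Type u} [Field k]

/-- The rank (the dimension of the image) of the structure map `F (a ≤ b)` of a persistence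
module of finite-dimensional `k`-vector spaces. -/
noncomputable def rankOfMap (F : ℝ ⥤ FGModuleCat k) {a b : ℝ} (h : a ≤ b) : ℤ :=
  Module.finrank k (LinearMap.range (F.map (homOfLE h)).hom.hom)

/-- The `ℤ`-valued rank function `dF : Dgm → ℤ` of an `S`-constructible persistence module
of finite-dimensional vector spaces (relative to the auxiliary constant `δ`); compare
`rankFn`. -/
noncomputable def rankFnZ (F : ℝ ⥤ FGModuleCat k) (S : Finset ℝ) (δ : ℝ) (I : PDInterval) : ℤ :=
  let M : ℝ := (if h : S.Nonempty then S.max' h else 0) + 1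
  let lp : ℝ := WithTop.untopD M I.p
  let q' : ℝ :=
    if I.q = ⊤ then max lp M
    else if WithTop.untopD 0 I.q ∈ S then WithTop.untopD 0 I.q - δ else WithTop.untopD 0 I.q
  rankOfMap F (min_le_right lp q')

/-- `Ft` is the `ℤ`-valued persistence diagram of the `S`-constructible persistence module
`F` of finite-dimensional vector spaces: it is finitely supported and satisfies the Möbius
inversion formula `dF I = ∑_{J ⊇ I} Ft J` for every `I ∈ Dgm`. -/
def IsPersDiagramZOf (F : ℝ ⥤ FGModuleCat k) (S : Finset ℝ) (δ : ℝ)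
    (Ft : PDInterval → ℤ) : Prop :=
  (Function.support Ft).Finite ∧
  ∀ I : PDInterval, rankFnZ F S δ I = ∑ᶠ (J : PDInterval) (_ : I.Sub J), Ft J

end VectRank

open LinearMap Submodule in
lemma aux_finrank_map {K V W : Type*} [Field K] [AddCommGroup V] [Module K V]
    [AddCommGroup W] [Module K W] [FiniteDimensional K V]
    (v : V →ₗ[K] W) (R : Submodule K V) :
    Module.finrank K (R.map v) + Module.finrank K ↥(ker v ⊓ R) = Module.finrank K R := by
  have h := (v.domRestrict R).finrank_range_add_finrank_ker
  rw [range_domRestrict, ker_domRestrict] at h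
  rw [show comap R.subtype (ker v) = comap R.subtype (ker v ⊓ R) by
    simp [comap_inf, Submodule.comap_subtype_self]] at h
  rwa [(comapSubtypeEquivOfLe (inf_le_right : ker v ⊓ R ≤ R)).finrank_eq] at h


open LinearMap Submodule in
/-- **Positivity for vector spaces (quadruple rank inequality)**: for a persistence module
`F : (ℝ, ≤) → Vect` of finite-dimensional `k`-vector spaces and reals `a ≤ b ≤ c ≤ d`,
`rank F(b ≤ c) + rank F(a ≤ d) ≥ rank F(a ≤ c) + rank F(b ≤ d)`. -/
theorem rank_quadruple_inequality {k : Type u} [Field k] (F : ℝ ⥤ FGModuleCat k)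
    (a b c d : ℝ) (hab : a ≤ b) (hbc : b ≤ c) (hcd : c ≤ d) :
    rankOfMap F hbc + rankOfMap F (hab.trans (hbc.trans hcd)) ≥
      rankOfMap F (hab.trans hbc) + rankOfMap F (hbc.trans hcd) := by
  set f : F.obj a →ₗ[k] F.obj b := (F.map (homOfLE hab)).hom.hom with hf
  set g : F.obj b →ₗ[k] F.obj c := (F.map (homOfLE hbc)).hom.hom with hg
  set h : F.obj c →ₗ[k] F.obj d := (F.map (homOfLE hcd)).hom.hom with hh
  unfold rankOfMap
  rw [show homOfLE (hab.trans (hbc.trans hcd)) =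
        homOfLE hab ≫ homOfLE hbc ≫ homOfLE hcd from rfl,
      show homOfLE (hab.trans hbc) = homOfLE hab ≫ homOfLE hbc from rfl,
      show homOfLE (hbc.trans hcd) = homOfLE hbc ≫ homOfLE hcd from rfl,
      F.map_comp, F.map_comp, F.map_comp]
  show (Module.finrank k ↥(range g) : ℤ) +
      Module.finrank k ↥(range (h.comp (g.comp f))) ≥
      (Module.finrank k ↥(range (g.comp f)) : ℤ) +
      Module.finrank k ↥(range (h.comp g))
  rw [show range (h.comp (g.comp f)) = Submodule.map h (Submodule.map g (range f)) by
        rw [LinearMap.range_comp, LinearMap.range_comp],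
      show range (g.comp f) = Submodule.map g (range f) from LinearMap.range_comp f g,
      show range (h.comp g) = Submodule.map h (range g) from LinearMap.range_comp g h]
  have h1 := aux_finrank_map h (Submodule.map g (range f))
  have h2 := aux_finrank_map h (range g)
  have h3 : Module.finrank k ↥(ker h ⊓ Submodule.map g (range f))
      ≤ Module.finrank k ↥(ker h ⊓ range g) :=
    Submodule.finrank_mono (inf_le_inf_left _ (by rw [← LinearMap.range_comp]; exact range_comp_le_range f g))
  push_cast [← h1, ← h2]
  omega
end

section
/- The interleaving infimum is attained: Let F and G be constructible persistence modules valued in a skeletally small abelian category C, and let ε₀ ≥ 0. If F and G are ε-interleaved for every ε > ε₀, then F and G are ε₀-interleaved. Consequently, if F and G are interleaved for some ε, the infimum defining the interleaving distance d_I(F,G) is attained. -/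
open CategoryTheory CategoryTheory.Limits
open scoped Classical ENNReal

/-! ### Auxiliary development for the attainment theorem -/

section AttainAux

variable {C : Type u} [Category.{v} C] [Abelian C]

namespace AttainAux

/-- Explicit constructor for points of `InterPoset ε`, protecting the instance. -/
def ip (ε : ℝ) (p : ℝ) (b : Bool) : InterPoset ε := (p, b)

@[simp] lemma ip_fst {ε p : ℝ} {b : Bool} : (ip ε p b).1 = p := rfl
@[simp] lemma ip_snd {ε p : ℝ} {b : Bool} : (ip ε p b).2 = b := rfl

lemma ip_le_def {ε : ℝ} {x y : InterPoset ε} :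
    x ≤ y ↔ x.1 + (if x.2 = y.2 then 0 else max ε 0) ≤ y.1 := Iff.rfl

lemma le_same {ε : ℝ} {p q : ℝ} (b : Bool) (h : p ≤ q) : ip ε p b ≤ ip ε q b := by
  rw [ip_le_def]; simp [h]

lemma le_diff {ε : ℝ} {p q : ℝ} {b c : Bool} (hbc : b ≠ c) (he : 0 ≤ ε) (h : p + ε ≤ q) :
    ip ε p b ≤ ip ε q c := by
  rw [ip_le_def]; simp only [ip_fst, ip_snd, if_neg hbc, max_eq_left he]; exact h

lemma of_le_same {ε : ℝ} {p q : ℝ} {b : Bool} (h : ip ε p b ≤ ip ε q b) : p ≤ q := by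
  rw [ip_le_def] at h; simpa using h

lemma of_le_diff {ε : ℝ} {p q : ℝ} {b c : Bool} (hbc : b ≠ c) (he : 0 ≤ ε)
    (h : ip ε p b ≤ ip ε q c) : p + ε ≤ q := by
  rw [ip_le_def] at h
  simp only [ip_fst, ip_snd, if_neg hbc, max_eq_left he] at h; exact h

/-- Preorder homs are subsingletons, so functors agree on parallel morphisms. -/
lemma map_hom_congr {P : Type*} [Preorder P] (Φ : P ⥤ C) {a b : P} (f g : a ⟶ b) :
    Φ.map f = Φ.map g := by rw [Subsingleton.elim f g]

/-- Master lemma: a structure map over an interval containing no critical value is an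
isomorphism. -/
lemma iso_of_forall {X : ℝ ⥤ C} {U : Finset ℝ} (hX : IsConstructibleOn C X U)
    {a b : ℝ} (h : a ≤ b) (hg : ∀ u ∈ U, u ≤ a ∨ b < u) :
    IsIso (X.map (homOfLE h)) := by
  by_cases hex : ∃ u ∈ U, u ≤ a
  · exact hX.2 a b h hex hg
  · push_neg at hex
    have hza : IsZero (X.obj a) := hX.1 a (fun s hs => hex s hs)
    have hzb : IsZero (X.obj b) := hX.1 b (fun s hs => by
      rcases hg s hs with h1 | h1
      · exact absurd h1 (not_le.mpr (hex s hs))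
      · exact h1)
    have : X.map (homOfLE h) = (hza.iso hzb).hom := hza.eq_of_src _ _
    rw [this]; infer_instance

/-- Preorder homs: composites of images agree. -/
lemma map_comp_congr_assoc {P : Type*} [Preorder P] (Φ : P ⥤ C) {a b b' c : P}
    (f : a ⟶ b) (g : b ⟶ c) (f' : a ⟶ b') (g' : b' ⟶ c) {Z : C} (k : Φ.obj c ⟶ Z) :
    Φ.map f ≫ Φ.map g ≫ k = Φ.map f' ≫ Φ.map g' ≫ k := by
  rw [← Φ.map_comp_assoc, ← Φ.map_comp_assoc, Subsingleton.elim (f ≫ g) (f' ≫ g')]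

lemma aux_nat {P : Type*} [Preorder P] (Φ : P ⥤ C) {D E : ℝ ⥤ C} (ι κ : ℝ ⥤ P)
    (i : ι ⋙ Φ ≅ D) (j : κ ⋙ Φ ≅ E) {p q p' q' : ℝ} (h : p ≤ q) (h' : p' ≤ q')
    (a : ι.obj q ⟶ κ.obj q') (b : ι.obj p ⟶ κ.obj p') :
    D.map (homOfLE h) ≫ i.inv.app q ≫ Φ.map a ≫ j.hom.app q' =
      (i.inv.app p ≫ Φ.map b ≫ j.hom.app p') ≫ E.map (homOfLE h') := by
  rw [← Category.assoc, i.inv.naturality]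
  simp only [Category.assoc, Functor.comp_map]
  rw [← j.hom.naturality (homOfLE h')]
  simp only [Functor.comp_map]
  exact congrArg (fun m => i.inv.app p ≫ m) (map_comp_congr_assoc Φ _ _ _ _ _)

lemma aux_tri {P : Type*} [Preorder P] (Φ : P ⥤ C) {D E : ℝ ⥤ C} (ι κ : ℝ ⥤ P)
    (i : ι ⋙ Φ ≅ D) (j : κ ⋙ Φ ≅ E) {p r s : ℝ} (h : p ≤ s)
    (a : ι.obj p ⟶ κ.obj r) (b : κ.obj r ⟶ ι.obj s) :
    (i.inv.app p ≫ Φ.map a ≫ j.hom.app r) ≫ (j.inv.app r ≫ Φ.map b ≫ i.hom.app s) =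
      D.map (homOfLE h) := by
  simp only [Category.assoc, Iso.hom_inv_id_app_assoc]
  rw [← Φ.map_comp_assoc, map_hom_congr Φ (a ≫ b) (ι.map (homOfLE h))]
  change i.inv.app p ≫ (ι ⋙ Φ).map (homOfLE h) ≫ i.hom.app s = _
  rw [i.hom.naturality, Iso.inv_hom_id_app_assoc]

lemma map_split (X : ℝ ⥤ C) {a b c : ℝ} (h1 : a ≤ b) (h2 : b ≤ c) (h : a ≤ c) :
    X.map (homOfLE h) = X.map (homOfLE h1) ≫ X.map (homOfLE h2) := by
  rw [← X.map_comp]; rfl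

end AttainAux
end AttainAux
namespace AttainAux

variable {C : Type u} [Category.{v} C] [Abelian C]

/-- `p` is within `μ` (from the right) of a critical value in `U`. -/
def Near (U : Finset ℝ) (μ p : ℝ) : Prop := ∃ u ∈ U, p - μ < u ∧ u ≤ p

/-- All the data of an `(ε₀+μ)`-interleaving between constructible modules, where `μ` is
small with respect to the gaps between critical values. -/
structure ILD (X Y : ℝ ⥤ C) (U V : Finset ℝ) (ε₀ μ : ℝ) where
  hX : IsConstructibleOn C X U
  hY : IsConstructibleOn C Y V
  he : 0 ≤ ε₀
  hm : 0 < μ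
  gap : ∀ a ∈ U ∪ V, ∀ b ∈ U ∪ V,
    (ε₀ < a - b → ε₀ + 3*μ < a - b) ∧ (2*ε₀ < a - b → 2*ε₀ + 3*μ < a - b)
  x : ∀ p : ℝ, X.obj p ⟶ Y.obj (p + ε₀ + μ)
  y : ∀ q : ℝ, Y.obj q ⟶ X.obj (q + ε₀ + μ)
  hx : ∀ (p q : ℝ) (h : p ≤ q),
    X.map (homOfLE h) ≫ x q = x p ≫ Y.map (homOfLE (by linarith : p + ε₀ + μ ≤ q + ε₀ + μ))
  hy : ∀ (p q : ℝ) (h : p ≤ q),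
    Y.map (homOfLE h) ≫ y q = y p ≫ X.map (homOfLE (by linarith : p + ε₀ + μ ≤ q + ε₀ + μ))
  hxy : ∀ p : ℝ, x p ≫ y (p + ε₀ + μ) =
    X.map (homOfLE (by linarith : p ≤ p + ε₀ + μ + ε₀ + μ))
  hyx : ∀ q : ℝ, y q ≫ x (q + ε₀ + μ) =
    Y.map (homOfLE (by linarith : q ≤ q + ε₀ + μ + ε₀ + μ))

namespace ILD

variable {X Y : ℝ ⥤ C} {U V : Finset ℝ} {ε₀ μ : ℝ}

/-- Swapping the roles of the two modules. -/
def symm (d : ILD X Y U V ε₀ μ) : ILD Y X V U ε₀ μ where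
  hX := d.hY
  hY := d.hX
  he := d.he
  hm := d.hm
  gap := fun a ha b hb => d.gap a (by rwa [Finset.union_comm]) b (by rwa [Finset.union_comm])
  x := d.y
  y := d.x
  hx := d.hy
  hy := d.hx
  hxy := d.hyx
  hyx := d.hxy

lemma symm_symm (d : ILD X Y U V ε₀ μ) : d.symm.symm = d := rfl

lemma isoX (d : ILD X Y U V ε₀ μ) {a b : ℝ} (h : a ≤ b) (hg : ∀ u ∈ U, u ≤ a ∨ b < u) :
    IsIso (X.map (homOfLE h)) := iso_of_forall d.hX h hg

lemma isoY (d : ILD X Y U V ε₀ μ) {a b : ℝ} (h : a ≤ b) (hg : ∀ v ∈ V, v ≤ a ∨ b < v) :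
    IsIso (Y.map (homOfLE h)) := iso_of_forall d.hY h hg

lemma isoXB (d : ILD X Y U V ε₀ μ) {p : ℝ} (hn : ¬ Near U μ p) (h : p - μ ≤ p) : IsIso (X.map (homOfLE h)) := by
  apply d.isoX h
  intro u hu
  by_contra hc
  push_neg at hc
  exact hn ⟨u, hu, hc.1, hc.2⟩

lemma isoYA (d : ILD X Y U V ε₀ μ) {p : ℝ} (hw : ∃ u ∈ U, p - 2*μ < u ∧ u ≤ p) (h : p + ε₀ ≤ p + ε₀ + μ) :
    IsIso (Y.map (homOfLE h)) := by
  obtain ⟨s, hs, hs1, hs2⟩ := hw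
  apply d.isoY h
  intro v hv
  by_contra hc
  push_neg at hc
  obtain ⟨h1, h2⟩ := hc
  have hg := (d.gap v (Finset.mem_union_right _ hv) s (Finset.mem_union_left _ hs)).1
    (by linarith)
  linarith

lemma isoXA_U (d : ILD X Y U V ε₀ μ) {p : ℝ} (hw : ∃ u ∈ U, p - 2*μ < u ∧ u ≤ p)
    (h : p + ε₀ + ε₀ ≤ p + ε₀ + ε₀ + μ) : IsIso (X.map (homOfLE h)) := by
  obtain ⟨s, hs, hs1, hs2⟩ := hw
  apply d.isoX h
  intro u hu
  by_contra hc
  push_neg at hc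
  obtain ⟨h1, h2⟩ := hc
  have hg := (d.gap u (Finset.mem_union_left _ hu) s (Finset.mem_union_left _ hs)).2
    (by linarith)
  linarith

lemma isoXA_V (d : ILD X Y U V ε₀ μ) {p : ℝ} (hw : ∃ v ∈ V, p + ε₀ - μ < v ∧ v ≤ p + ε₀)
    (h : p + ε₀ + ε₀ ≤ p + ε₀ + ε₀ + μ) : IsIso (X.map (homOfLE h)) := by
  obtain ⟨t, ht, ht1, ht2⟩ := hw
  apply d.isoX h
  intro u hu
  by_contra hc
  push_neg at hc
  obtain ⟨h1, h2⟩ := hc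
  have hg := (d.gap u (Finset.mem_union_left _ hu) t (Finset.mem_union_right _ ht)).1
    (by linarith)
  have := d.hm
  linarith

lemma isoFM (d : ILD X Y U V ε₀ μ) {p : ℝ} (hw : ∃ u ∈ U, p - μ < u ∧ u ≤ p)
    (h : p + ε₀ + ε₀ + μ ≤ p + ε₀ + μ + ε₀ + μ) : IsIso (X.map (homOfLE h)) := by
  obtain ⟨s, hs, hs1, hs2⟩ := hw
  apply d.isoX h
  intro u hu
  by_contra hc
  push_neg at hc
  obtain ⟨h1, h2⟩ := hc
  have hg := (d.gap u (Finset.mem_union_left _ hu) s (Finset.mem_union_left _ hs)).2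
    (by linarith)
  linarith

/-- The candidate `ε₀`-interleaving map `X p ⟶ Y (p + ε₀)`. -/
noncomputable def b (d : ILD X Y U V ε₀ μ) (p : ℝ) : X.obj p ⟶ Y.obj (p + ε₀) :=
  if hn : Near U μ p then
    haveI : IsIso (Y.map (homOfLE (show p + ε₀ ≤ p + ε₀ + μ by linarith [d.hm.le]))) :=
      d.isoYA (by obtain ⟨u, hu, h1, h2⟩ := hn; exact ⟨u, hu, by linarith [d.hm.le], h2⟩) _
    d.x p ≫ inv (Y.map (homOfLE (show p + ε₀ ≤ p + ε₀ + μ by linarith [d.hm.le])))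
  else
    haveI : IsIso (X.map (homOfLE (show p - μ ≤ p by linarith [d.hm.le]))) := d.isoXB hn _
    inv (X.map (homOfLE (show p - μ ≤ p by linarith [d.hm.le]))) ≫ d.x (p - μ) ≫
      Y.map (homOfLE (show p - μ + ε₀ + μ ≤ p + ε₀ by linarith))

lemma b_pos (d : ILD X Y U V ε₀ μ) {p : ℝ} (hn : Near U μ p) (h1 : p + ε₀ ≤ p + ε₀ + μ)
    [hGA : IsIso (Y.map (homOfLE h1))] :
    d.b p = d.x p ≫ inv (Y.map (homOfLE h1)) := by
  unfold b
  rw [dif_pos hn]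

lemma b_neg (d : ILD X Y U V ε₀ μ) {p : ℝ} (hn : ¬ Near U μ p) (h1 : p - μ ≤ p) (h2 : p - μ + ε₀ + μ ≤ p + ε₀)
    [hXB : IsIso (X.map (homOfLE h1))] :
    d.b p = inv (X.map (homOfLE h1)) ≫ d.x (p - μ) ≫ Y.map (homOfLE h2) := by
  unfold b
  rw [dif_neg hn]

/-- The core computation: precomposing the inverted shift with `y` gives the structure map. -/
lemma star (d : ILD X Y U V ε₀ μ) (p : ℝ) (h1 : p + ε₀ ≤ p + ε₀ + μ) [hGA : IsIso (Y.map (homOfLE h1))]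
    (h2 : p ≤ p + ε₀ + ε₀ + μ) :
    d.x p ≫ inv (Y.map (homOfLE h1)) ≫ d.y (p + ε₀) = X.map (homOfLE h2) := by
  by_cases hb : Near U μ p
  · haveI : IsIso (X.map (homOfLE (show p + ε₀ + ε₀ + μ ≤ p + ε₀ + μ + ε₀ + μ
        by linarith [d.hm.le]))) := d.isoFM hb _
    rw [← cancel_mono (X.map (homOfLE (show p + ε₀ + ε₀ + μ ≤ p + ε₀ + μ + ε₀ + μ
      by linarith [d.hm.le])))]
    simp only [Category.assoc]
    rw [← d.hy (p + ε₀) (p + ε₀ + μ) h1]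
    rw [IsIso.inv_hom_id_assoc, d.hxy p, ← X.map_comp]
    rfl
  · haveI : IsIso (X.map (homOfLE (show p - μ ≤ p by linarith [d.hm.le]))) := d.isoXB hb _
    rw [← cancel_epi (X.map (homOfLE (show p - μ ≤ p by linarith [d.hm.le])))]
    rw [← Category.assoc, d.hx (p - μ) p (by linarith [d.hm.le])]
    rw [map_split Y (show p - μ + ε₀ + μ ≤ p + ε₀ by linarith) h1
      (show p - μ + ε₀ + μ ≤ p + ε₀ + μ by linarith [d.hm.le])]
    simp only [Category.assoc]
    rw [IsIso.hom_inv_id_assoc]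
    rw [d.hy (p - μ + ε₀ + μ) (p + ε₀) (by linarith)]
    rw [← Category.assoc, d.hxy (p - μ), ← X.map_comp, ← X.map_comp]
    rfl

end ILD
end AttainAux
namespace AttainAux
namespace ILD

variable {C : Type u} [Category.{v} C] [Abelian C]
variable {X Y : ℝ ⥤ C} {U V : Finset ℝ} {ε₀ μ : ℝ}

lemma near_wk (d : ILD X Y U V ε₀ μ) {r : ℝ} (h : Near U μ r) :
    ∃ u ∈ U, r - 2*μ < u ∧ u ≤ r := by
  obtain ⟨u, hu, a, b⟩ := h
  exact ⟨u, hu, by linarith [d.hm.le], b⟩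

@[simp] lemma symm_x (d : ILD X Y U V ε₀ μ) : d.symm.x = d.y := rfl
@[simp] lemma symm_y (d : ILD X Y U V ε₀ μ) : d.symm.y = d.x := rfl

/-- Naturality of the candidate interleaving map. -/
lemma b_nat (d : ILD X Y U V ε₀ μ) (p' p : ℝ) (h : p' ≤ p) (h' : p' + ε₀ ≤ p + ε₀) :
    X.map (homOfLE h) ≫ d.b p = d.b p' ≫ Y.map (homOfLE h') := by
  have hm := d.hm
  have l1p : p + ε₀ ≤ p + ε₀ + μ := by linarith
  have l1p' : p' + ε₀ ≤ p' + ε₀ + μ := by linarith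
  have lBp : p - μ ≤ p := by linarith
  have lBp' : p' - μ ≤ p' := by linarith
  have lCp : p - μ + ε₀ + μ ≤ p + ε₀ := by linarith
  have lCp' : p' - μ + ε₀ + μ ≤ p' + ε₀ := by linarith
  by_cases hP' : Near U μ p' <;> by_cases hP : Near U μ p
  · -- N2 : both Near
    haveI := d.isoYA (d.near_wk hP) l1p
    haveI := d.isoYA (d.near_wk hP') l1p'
    rw [d.b_pos hP l1p, d.b_pos hP' l1p']
    rw [← cancel_mono (Y.map (homOfLE l1p))]
    simp only [Category.assoc, IsIso.inv_hom_id, Category.comp_id]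
    rw [d.hx p' p h]
    simp only [Category.assoc, ← Y.map_comp, homOfLE_comp]
    rw [map_split Y l1p' (show p' + ε₀ + μ ≤ p + ε₀ + μ by linarith) (by linarith)]
    rw [IsIso.inv_hom_id_assoc]
  · -- N4 : Near p', ¬ Near p
    haveI := d.isoYA (d.near_wk hP') l1p'
    haveI := d.isoXB hP lBp
    rw [d.b_pos hP' l1p', d.b_neg hP lBp lCp]
    by_cases hpp : p' ≤ p - μ
    · have e1 : X.map (homOfLE h) ≫ inv (X.map (homOfLE lBp)) = X.map (homOfLE hpp) := by
        rw [IsIso.comp_inv_eq, ← X.map_comp]; rfl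
      rw [← Category.assoc, e1, ← Category.assoc, d.hx p' (p - μ) hpp]
      simp only [Category.assoc, ← Y.map_comp, homOfLE_comp]
      rw [map_split Y l1p' (show p' + ε₀ + μ ≤ p + ε₀ by linarith) (by linarith)]
      rw [IsIso.inv_hom_id_assoc]
    · push_neg at hpp
      have hs : ∃ u ∈ U, p - 2*μ < u ∧ u ≤ p := by
        obtain ⟨u, hu, h1, h2⟩ := hP'
        exact ⟨u, hu, by linarith, by linarith⟩
      haveI := d.isoYA hs l1p
      rw [← cancel_mono (Y.map (homOfLE l1p))]
      simp only [Category.assoc, ← Y.map_comp, homOfLE_comp]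
      rw [← d.hx (p - μ) p lBp]
      rw [IsIso.inv_hom_id_assoc]
      rw [d.hx p' p h]
      rw [map_split Y l1p' (show p' + ε₀ + μ ≤ p + ε₀ + μ by linarith) (by linarith)]
      rw [IsIso.inv_hom_id_assoc]
  · -- N3 : ¬ Near p', Near p
    haveI := d.isoYA (d.near_wk hP) l1p
    haveI := d.isoXB hP' lBp'
    rw [d.b_pos hP l1p, d.b_neg hP' lBp' lCp']
    rw [← cancel_mono (Y.map (homOfLE l1p)), ← cancel_epi (X.map (homOfLE lBp'))]
    simp only [Category.assoc, IsIso.inv_hom_id, Category.comp_id, IsIso.hom_inv_id_assoc,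
      ← Functor.map_comp, homOfLE_comp]
    rw [d.hx p' p h, ← Category.assoc, d.hx (p' - μ) p' lBp']
    simp only [Category.assoc, ← Y.map_comp, homOfLE_comp]
  · -- N1 : both ¬ Near
    haveI := d.isoXB hP lBp
    haveI := d.isoXB hP' lBp'
    rw [d.b_neg hP lBp lCp, d.b_neg hP' lBp' lCp']
    rw [← cancel_epi (X.map (homOfLE lBp'))]
    rw [← Category.assoc, show X.map (homOfLE lBp') ≫ X.map (homOfLE h) =
      X.map (homOfLE (show p' - μ ≤ p - μ by linarith)) ≫ X.map (homOfLE lBp) from by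
        rw [← X.map_comp, ← X.map_comp]; rfl]
    simp only [Category.assoc, IsIso.hom_inv_id_assoc]
    rw [← Category.assoc, d.hx (p' - μ) (p - μ) (by linarith)]
    simp only [Category.assoc, ← Y.map_comp, homOfLE_comp]

/-- The triangle identity for the candidate interleaving maps. -/
lemma tri (d : ILD X Y U V ε₀ μ) (p : ℝ) (h2 : p ≤ p + ε₀ + ε₀) :
    d.b p ≫ d.symm.b (p + ε₀) = X.map (homOfLE h2) := by
  have hm := d.hm
  have he := d.he
  have l1p : p + ε₀ ≤ p + ε₀ + μ := by linarith
  have l1q : p + ε₀ + ε₀ ≤ p + ε₀ + ε₀ + μ := by linarith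
  have lBp : p - μ ≤ p := by linarith
  have lCp : p - μ + ε₀ + μ ≤ p + ε₀ := by linarith
  have lBq : p + ε₀ - μ ≤ p + ε₀ := by linarith
  have lCq : p + ε₀ - μ + ε₀ + μ ≤ p + ε₀ + ε₀ := by linarith
  by_cases hP : Near U μ p <;> by_cases hQ : Near V μ (p + ε₀)
  · -- [P, Q]
    haveI := d.isoYA (d.near_wk hP) l1p
    haveI : IsIso (X.map (homOfLE l1q)) := d.isoXA_V hQ l1q
    rw [d.b_pos hP l1p, d.symm.b_pos hQ l1q]
    simp only [symm_x, symm_y]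
    rw [← cancel_mono (X.map (homOfLE l1q))]
    simp only [Category.assoc, IsIso.inv_hom_id, Category.comp_id]
    rw [d.star p l1p (by linarith)]
    rw [← X.map_comp]; rfl
  · -- [P, ¬Q]
    haveI := d.isoYA (d.near_wk hP) l1p
    haveI : IsIso (Y.map (homOfLE lBq)) := d.symm.isoXB hQ lBq
    haveI : IsIso (X.map (homOfLE l1q)) := d.isoXA_U (d.near_wk hP) l1q
    rw [d.b_pos hP l1p, d.symm.b_neg hQ lBq lCq]
    simp only [symm_x, symm_y]
    rw [← cancel_mono (X.map (homOfLE l1q))]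
    simp only [Category.assoc, ← X.map_comp, homOfLE_comp]
    rw [← d.hy (p + ε₀ - μ) (p + ε₀) lBq]
    rw [IsIso.inv_hom_id_assoc]
    rw [d.star p l1p (by linarith)]
  · -- [¬P, Q]
    haveI := d.isoXB hP lBp
    haveI : IsIso (X.map (homOfLE l1q)) := d.isoXA_V hQ l1q
    rw [d.b_neg hP lBp lCp, d.symm.b_pos hQ l1q]
    simp only [symm_x, symm_y]
    rw [← cancel_mono (X.map (homOfLE l1q)), ← cancel_epi (X.map (homOfLE lBp))]
    simp only [Category.assoc, IsIso.inv_hom_id, Category.comp_id, IsIso.hom_inv_id_assoc]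
    rw [d.hy (p - μ + ε₀ + μ) (p + ε₀) lCp]
    rw [← Category.assoc, d.hxy (p - μ)]
    simp only [← X.map_comp, homOfLE_comp]
  · -- [¬P, ¬Q]
    haveI := d.isoXB hP lBp
    haveI : IsIso (Y.map (homOfLE lBq)) := d.symm.isoXB hQ lBq
    rw [d.b_neg hP lBp lCp, d.symm.b_neg hQ lBq lCq]
    simp only [symm_x, symm_y]
    rw [← cancel_epi (X.map (homOfLE lBp))]
    simp only [Category.assoc, IsIso.hom_inv_id_assoc]
    by_cases hb : Near U μ (p - μ)
    · have hs : ∃ u ∈ U, p - 2*μ < u ∧ u ≤ p := by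
        obtain ⟨u, hu, a, b⟩ := hb
        exact ⟨u, hu, by linarith, by linarith⟩
      haveI := d.isoXA_U hs l1q
      rw [← cancel_mono (X.map (homOfLE l1q))]
      simp only [Category.assoc, ← X.map_comp, homOfLE_comp]
      rw [← d.hy (p + ε₀ - μ) (p + ε₀) lBq]
      rw [IsIso.inv_hom_id_assoc]
      rw [d.hy (p - μ + ε₀ + μ) (p + ε₀) lCp]
      rw [← Category.assoc, d.hxy (p - μ)]
      simp only [← X.map_comp, homOfLE_comp]
    · haveI := d.isoXB hb (show p - μ - μ ≤ p - μ by linarith)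
      rw [← cancel_epi (X.map (homOfLE (show p - μ - μ ≤ p - μ by linarith)))]
      rw [← Category.assoc, d.hx (p - μ - μ) (p - μ) (by linarith)]
      simp only [Category.assoc]
      slice_lhs 2 3 => rw [← Y.map_comp]
      simp only [homOfLE_comp]
      rw [map_split Y (show p - μ - μ + ε₀ + μ ≤ p + ε₀ - μ by linarith) lBq (by linarith)]
      simp only [Category.assoc, IsIso.hom_inv_id_assoc]
      slice_lhs 2 3 => rw [d.hy (p - μ - μ + ε₀ + μ) (p + ε₀ - μ) (by linarith)]
      slice_lhs 1 2 => rw [d.hxy (p - μ - μ)]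
      simp only [Category.assoc, ← X.map_comp, homOfLE_comp]

end ILD
end AttainAux
namespace AttainAux
namespace ILD

variable {C : Type u} [Category.{v} C] [Abelian C]
variable {X Y : ℝ ⥤ C} {U V : Finset ℝ} {ε₀ μ : ℝ}

/-- The interleaving functor at parameter `ε₀` built from the data. -/
noncomputable def mk0 (d : ILD X Y U V ε₀ μ) : InterPoset ε₀ ⥤ C where
  obj z := match z with
    | (p, false) => X.obj p
    | (p, true) => Y.obj p
  map {z w} f := match z, w, f with
    | (p, false), (q, false), f =>
        X.map (homOfLE (of_le_same (f.down.down : ip ε₀ p false ≤ ip ε₀ q false)))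
    | (p, false), (q, true), f =>
        d.b p ≫ Y.map (homOfLE (of_le_diff (by decide) d.he
          (f.down.down : ip ε₀ p false ≤ ip ε₀ q true)))
    | (p, true), (q, false), f =>
        d.symm.b p ≫ X.map (homOfLE (of_le_diff (by decide) d.he
          (f.down.down : ip ε₀ p true ≤ ip ε₀ q false)))
    | (p, true), (q, true), f =>
        Y.map (homOfLE (of_le_same (f.down.down : ip ε₀ p true ≤ ip ε₀ q true)))
  map_id := by
    rintro ⟨p, b⟩
    cases b
    · exact X.map_id p
    · exact Y.map_id p
  map_comp := by
    rintro ⟨p, bp⟩ ⟨q, bq⟩ ⟨r, br⟩ f g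
    have he := d.he
    cases bp <;> cases bq <;> cases br
    · -- fff
      rw [← X.map_comp]; rfl
    · -- fft
      have hf : p ≤ q := of_le_same (f.down.down : ip ε₀ p false ≤ ip ε₀ q false)
      rw [← Category.assoc, d.b_nat p q hf (by linarith)]
      simp only [Category.assoc, ← Y.map_comp, homOfLE_comp]
    · -- ftf
      have hf : p + ε₀ ≤ q := of_le_diff (by decide) he
        (f.down.down : ip ε₀ p false ≤ ip ε₀ q true)
      slice_rhs 2 3 => rw [d.symm.b_nat (p + ε₀) q hf (by linarith)]
      slice_rhs 1 2 => rw [d.tri p (by linarith)]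
      simp only [Category.assoc, ← X.map_comp, homOfLE_comp]
    · -- ftt
      simp only [Category.assoc, ← Y.map_comp, homOfLE_comp]
    · -- tff
      simp only [Category.assoc, ← X.map_comp, homOfLE_comp]
    · -- tft
      have hf : p + ε₀ ≤ q := of_le_diff (by decide) he
        (f.down.down : ip ε₀ p true ≤ ip ε₀ q false)
      have tri2 : d.symm.b p ≫ d.b (p + ε₀) = Y.map (homOfLE (show p ≤ p + ε₀ + ε₀
          by linarith)) := by
        have h := d.symm.tri p (show p ≤ p + ε₀ + ε₀ by linarith)
        rwa [d.symm_symm] at h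
      slice_rhs 2 3 => rw [d.b_nat (p + ε₀) q hf (by linarith)]
      slice_rhs 1 2 => rw [tri2]
      simp only [Category.assoc, ← Y.map_comp, homOfLE_comp]
    · -- ttf
      have hf : p ≤ q := of_le_same (f.down.down : ip ε₀ p true ≤ ip ε₀ q true)
      rw [← Category.assoc, d.symm.b_nat p q hf (by linarith)]
      simp only [Category.assoc, ← X.map_comp, homOfLE_comp]
    · -- ttt
      rw [← Y.map_comp]; rfl

noncomputable def iso0 (d : ILD X Y U V ε₀ μ) : InterPoset.iota0 ε₀ ⋙ d.mk0 ≅ X :=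
  NatIso.ofComponents (fun p => Iso.refl _) (by
    intro p q f
    simp only [Iso.refl_hom, Category.comp_id, Category.id_comp]
    exact (Category.comp_id _).trans ((map_hom_congr X _ f).trans (Category.id_comp _).symm))

noncomputable def iso1 (d : ILD X Y U V ε₀ μ) : InterPoset.iota1 ε₀ ⋙ d.mk0 ≅ Y :=
  NatIso.ofComponents (fun p => Iso.refl _) (by
    intro p q f
    simp only [Iso.refl_hom, Category.comp_id, Category.id_comp]
    exact (Category.comp_id _).trans ((map_hom_congr Y _ f).trans (Category.id_comp _).symm))

lemma toInterleaved (d : ILD X Y U V ε₀ μ) : Interleaved C X Y ε₀ :=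
  ⟨d.mk0, ⟨d.iso0⟩, ⟨d.iso1⟩⟩

end ILD
end AttainAux
namespace AttainAux

variable {C : Type u} [Category.{v} C] [Abelian C]

/-- Interleavings persist when the parameter increases. -/
lemma interleaved_mono {F G : ℝ ⥤ C} {ε ε' : ℝ} (h : Interleaved C F G ε) (hle : ε ≤ ε') :
    Interleaved C F G ε' := by
  obtain ⟨Φ, ⟨i0⟩, ⟨i1⟩⟩ := h
  have hmono : Monotone (fun z : InterPoset ε' => (show InterPoset ε from z)) := by
    intro a b hab
    have hab' : a.1 + (if a.2 = b.2 then 0 else max ε' 0) ≤ b.1 := ip_le_def.mp hab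
    apply ip_le_def.mpr
    dsimp only
    by_cases hc : a.2 = b.2
    · simpa [hc] using hab'
    · rw [if_neg hc] at hab' ⊢
      have : max ε 0 ≤ max ε' 0 := max_le_max hle le_rfl
      linarith
  have e0 : InterPoset.iota0 ε' ⋙ hmono.functor = InterPoset.iota0 ε :=
    CategoryTheory.Functor.ext (fun p => rfl) (fun p q f => by
      simp only [eqToHom_refl, Category.comp_id, Category.id_comp]
      exact Subsingleton.elim _ _)
  have e1 : InterPoset.iota1 ε' ⋙ hmono.functor = InterPoset.iota1 ε :=
    CategoryTheory.Functor.ext (fun p => rfl) (fun p q f => by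
      simp only [eqToHom_refl, Category.comp_id, Category.id_comp]
      exact Subsingleton.elim _ _)
  refine ⟨hmono.functor ⋙ Φ, ⟨?_⟩, ⟨?_⟩⟩
  · exact (Functor.associator _ _ _).symm ≪≫ eqToIso (by rw [e0]) ≪≫ i0
  · exact (Functor.associator _ _ _).symm ≪≫ eqToIso (by rw [e1]) ≪≫ i1

namespace ILD

/-- Extracting the pointwise interleaving data from an `(ε₀+μ)`-interleaving. -/
lemma of_interleaved {F G : ℝ ⥤ C} {S T : Finset ℝ} {ε₀ μ : ℝ}
    (hF : IsConstructibleOn C F S) (hG : IsConstructibleOn C G T) (he : 0 ≤ ε₀) (hm : 0 < μ)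
    (gap : ∀ a ∈ S ∪ T, ∀ b ∈ S ∪ T,
      (ε₀ < a - b → ε₀ + 3*μ < a - b) ∧ (2*ε₀ < a - b → 2*ε₀ + 3*μ < a - b))
    (hI : Interleaved C F G (ε₀ + μ)) : Nonempty (ILD F G S T ε₀ μ) := by
  obtain ⟨Φ, ⟨i0⟩, ⟨i1⟩⟩ := hI
  have hep : (0:ℝ) ≤ ε₀ + μ := by linarith
  refine ⟨⟨hF, hG, he, hm, gap,
    fun p => i0.inv.app p ≫
      Φ.map (homOfLE (le_diff (by decide) hep (by linarith : p + (ε₀ + μ) ≤ p + ε₀ + μ)) :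
        ip (ε₀+μ) p false ⟶ ip (ε₀+μ) (p + ε₀ + μ) true) ≫ i1.hom.app (p + ε₀ + μ),
    fun q => i1.inv.app q ≫
      Φ.map (homOfLE (le_diff (by decide) hep (by linarith : q + (ε₀ + μ) ≤ q + ε₀ + μ)) :
        ip (ε₀+μ) q true ⟶ ip (ε₀+μ) (q + ε₀ + μ) false) ≫ i0.hom.app (q + ε₀ + μ),
    ?_, ?_, ?_, ?_⟩⟩
  · -- hx
    intro p q h
    exact aux_nat Φ _ _ i0 i1 h _ _ _
  · -- hy
    intro p q h
    exact aux_nat Φ _ _ i1 i0 h _ _ _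
  · -- hxy
    intro p
    exact aux_tri Φ _ _ i0 i1 _ _ _
  · -- hyx
    intro q
    exact aux_tri Φ _ _ i1 i0 _ _ _

end ILD

/-- Choice of the auxiliary constant `δ` given the finite set of endpoint differences. -/
lemma exists_delta (ε₀ : ℝ) (W : Finset ℝ) : ∃ δ : ℝ, 0 < δ ∧ ∀ c ∈ W,
    (ε₀ < c → ε₀ + 3*δ < c) ∧ (2*ε₀ < c → 2*ε₀ + 3*δ < c) := by
  classical
  set K : Finset ℝ := insert 1 ((W.filter (fun c => ε₀ < c)).image (fun c => (c - ε₀)/4) ∪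
    (W.filter (fun c => 2*ε₀ < c)).image (fun c => (c - 2*ε₀)/4)) with hK
  have hne : K.Nonempty := ⟨1, Finset.mem_insert_self _ _⟩
  refine ⟨K.min' hne, ?_, ?_⟩
  · rw [Finset.lt_min'_iff]
    intro y hy
    simp only [hK, Finset.mem_insert, Finset.mem_union, Finset.mem_image,
      Finset.mem_filter] at hy
    rcases hy with rfl | ⟨c, ⟨_, hlt⟩, rfl⟩ | ⟨c, ⟨_, hlt⟩, rfl⟩
    · norm_num
    · linarith
    · linarith
  · intro c hc
    constructor
    · intro hlt
      have hmem : (c - ε₀)/4 ∈ K := Finset.mem_insert_of_mem (Finset.mem_union_left _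
        (Finset.mem_image_of_mem _ (Finset.mem_filter.mpr ⟨hc, hlt⟩)))
      have := Finset.min'_le K _ hmem
      linarith
    · intro hlt
      have hmem : (c - 2*ε₀)/4 ∈ K := Finset.mem_insert_of_mem (Finset.mem_union_right _
        (Finset.mem_image_of_mem _ (Finset.mem_filter.mpr ⟨hc, hlt⟩)))
      have := Finset.min'_le K _ hmem
      linarith

end AttainAux

/-- **The interleaving infimum is attained**: let `F` and `G` be constructible persistence
modules valued in a skeletally small abelian category and `ε₀ ≥ 0`.  If `F` and `G` are
`ε`-interleaved for every `ε > ε₀`, then they are `ε₀`-interleaved.  Consequently, if `F`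
and `G` are interleaved at all, the infimum defining `d_I(F, G)` is attained. -/
theorem interleaving_infimum_attained {C : Type u} [Category.{v} C] [Abelian C]
    (F G : ℝ ⥤ C) (hF : IsConstructible C F) (hG : IsConstructible C G) :
    (∀ ε₀ : ℝ, 0 ≤ ε₀ → (∀ ε : ℝ, ε₀ < ε → Interleaved C F G ε) →
      Interleaved C F G ε₀) ∧
    ((∃ ε : ℝ, 0 ≤ ε ∧ Interleaved C F G ε) →
      ∃ ε : ℝ, 0 ≤ ε ∧ Interleaved C F G ε ∧
        ENNReal.ofReal ε = interleavingDist C F G) := by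
  classical
  obtain ⟨S, hS⟩ := hF
  obtain ⟨T, hT⟩ := hG
  have part1 : ∀ ε₀ : ℝ, 0 ≤ ε₀ → (∀ ε : ℝ, ε₀ < ε → Interleaved C F G ε) →
      Interleaved C F G ε₀ := by
    intro ε₀ he H
    obtain ⟨δ, hδ, hgap⟩ := AttainAux.exists_delta ε₀
      (((S ∪ T) ×ˢ (S ∪ T)).image (fun pr => pr.1 - pr.2))
    have gap : ∀ a ∈ S ∪ T, ∀ b ∈ S ∪ T,
        (ε₀ < a - b → ε₀ + 3*δ < a - b) ∧ (2*ε₀ < a - b → 2*ε₀ + 3*δ < a - b) := by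
      intro a ha b hb
      exact hgap _ (Finset.mem_image.mpr ⟨(a, b), Finset.mem_product.mpr ⟨ha, hb⟩, rfl⟩)
    obtain ⟨d⟩ := AttainAux.ILD.of_interleaved hS hT he hδ gap (H (ε₀ + δ) (by linarith))
    exact d.toInterleaved
  refine ⟨part1, ?_⟩
  rintro ⟨ε1, hε1, hI1⟩
  have hne : ({ε : ℝ | 0 ≤ ε ∧ Interleaved C F G ε}).Nonempty := ⟨ε1, hε1, hI1⟩
  have hbdd : BddBelow {ε : ℝ | 0 ≤ ε ∧ Interleaved C F G ε} := ⟨0, fun x hx => hx.1⟩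
  set ε₀ := sInf {ε : ℝ | 0 ≤ ε ∧ Interleaved C F G ε} with hε₀def
  have he0 : 0 ≤ ε₀ := le_csInf hne (fun x hx => hx.1)
  have hI0 : Interleaved C F G ε₀ := by
    apply part1 ε₀ he0
    intro ε hε
    obtain ⟨a, haA, halt⟩ := exists_lt_of_csInf_lt hne hε
    exact AttainAux.interleaved_mono haA.2 halt.le
  refine ⟨ε₀, he0, hI0, ?_⟩
  unfold interleavingDist
  apply le_antisymm
  · apply le_sInf
    rintro x ⟨ε, hε0', hIε, rfl⟩
    exact ENNReal.ofReal_le_ofReal (csInf_le hbdd ⟨hε0', hIε⟩)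
  · exact sInf_le ⟨ε₀, he0, hI0, rfl⟩
end
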